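/- For every integer q ≥ 1, the chromatic number of G_q is at most C(q+1,2): the binomial coefficient (q+1 choose 2). Specifically, the canonical independent sets A_{i,j} for 1 ≤ i < j ≤ q+1 cover all vertices of G_q. -/

import Mathlib

/-- A vector u ∈ [q]^{q²} is balanced if each symbol of [q] appears exactly q times. -/
def BalancedVec (q : ℕ) (u : Fin (q ^ 2) → Fin q) : Prop :=
  ∀ j : Fin q, (Finset.univ.filter fun i => u i = j).card = q

/-- The graph G_q: vertices are the balanced vectors in [q]^{q²}, and u ~ v iff the
pairs (u_i, v_i) over i ∈ [q²] exhaust all of [q]×[q]. -/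
def Gq (q : ℕ) : SimpleGraph {u : Fin (q ^ 2) → Fin q // BalancedVec q u} where
  Adj u v := u ≠ v ∧ Function.Surjective (fun i : Fin (q ^ 2) => (u.val i, v.val i))
  symm := by
    constructor
    rintro u v ⟨hne, hs⟩
    refine ⟨hne.symm, fun p => ?_⟩
    obtain ⟨i, hi⟩ := hs (p.2, p.1)
    rw [Prod.ext_iff] at hi
    exact ⟨i, by rw [Prod.ext_iff]; exact ⟨hi.2, hi.1⟩⟩
  loopless := by constructor; rintro u ⟨hne, _⟩; exact hne rfl

lemma exists_pair (q : ℕ) (h : q + 1 ≤ q ^ 2) (u : Fin (q ^ 2) → Fin q) :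
    ∃ p : Fin (q + 1) × Fin (q + 1), p.1 ≠ p.2 ∧
      u (Fin.castLE h p.1) = u (Fin.castLE h p.2) := by
  have hcard : Fintype.card (Fin q) < Fintype.card (Fin (q + 1)) := by simp
  obtain ⟨i, j, hij, he⟩ := Fintype.exists_ne_map_eq_of_card_lt
    (fun i : Fin (q + 1) => u (Fin.castLE h i)) hcard
  exact ⟨(i, j), hij, he⟩

/-- For every q ≥ 1, the chromatic number of G_q is at most (q+1 choose 2). -/
theorem stmt8 (q : ℕ) (hq : 1 ≤ q) :
    (Gq q).chromaticNumber ≤ ((q + 1).choose 2 : ℕ) := by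
  rcases eq_or_lt_of_le hq with h1 | h2
  · -- q = 1 : the graph has no edges
    subst h1
    have : (Gq 1).chromaticNumber ≤ (1 : ℕ) := by
      refine (SimpleGraph.Coloring.mk (fun _ => (0 : Fin 1)) ?_).colorable.chromaticNumber_le
      rintro u v ⟨hne, hs⟩ _
      exact hne (Subtype.ext (funext fun i => Subsingleton.elim _ _))
    refine this.trans ?_
    norm_num
  · have h : q + 1 ≤ q ^ 2 := by nlinarith
    -- injectivity of the adjacency map
    have key : ∀ u v : {u : Fin (q ^ 2) → Fin q // BalancedVec q u},
        (Gq q).Adj u v → Function.Injective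
          (fun i : Fin (q ^ 2) => (u.val i, v.val i)) := by
      rintro u v ⟨-, hs⟩
      have : Fintype.card (Fin q × Fin q) = Fintype.card (Fin (q ^ 2)) := by
        simp [sq]
      exact (Fintype.bijective_iff_surjective_and_card _).2 ⟨hs, this.symm⟩ |>.1
    -- the coloring
    classical
    let C : SimpleGraph.Coloring (Gq q) {a : Sym2 (Fin (q + 1)) // ¬a.IsDiag} := by
      refine SimpleGraph.Coloring.mk
        (fun u => ⟨s((exists_pair q h u.val).choose.1, (exists_pair q h u.val).choose.2),
          by simpa using (exists_pair q h u.val).choose_spec.1⟩) ?_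
      intro u v hadj hc
      obtain ⟨hune, hue⟩ := (exists_pair q h u.val).choose_spec
      obtain ⟨hvne, hve⟩ := (exists_pair q h v.val).choose_spec
      set pu := (exists_pair q h u.val).choose
      set pv := (exists_pair q h v.val).choose
      have hs2 : s(pu.1, pu.2) = s(pv.1, pv.2) := congrArg Subtype.val hc
      rw [Sym2.eq_iff] at hs2
      have hinj := key u v hadj
      rcases hs2 with ⟨h1, h2⟩ | ⟨h1, h2⟩
      · have : (Fin.castLE h pu.1) = (Fin.castLE h pu.2) := by
          apply hinj
          simp only [Prod.mk.injEq]
          exact ⟨hue, by rw [h1, h2]; exact hve⟩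
        exact hune (Fin.castLE_injective h this)
      · have : (Fin.castLE h pu.1) = (Fin.castLE h pu.2) := by
          apply hinj
          simp only [Prod.mk.injEq]
          exact ⟨hue, by rw [h1, h2]; exact hve.symm⟩
        exact hune (Fin.castLE_injective h this)
    have := C.colorable.chromaticNumber_le
    rwa [Sym2.card_subtype_not_diag, Fintype.card_fin] at this
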